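/- With f̃(x₀, x') = (x₁, x₀x₁, …, xₙ, x₀xₙ) as above, and β = Σⱼ (xⱼ dyⱼ − yⱼ dxⱼ) the standard primitive 1-form on ℝ^{2n} (in coordinates (x₁,y₁,…,xₙ,yₙ)), the pullback f̃*β equals (Σⱼ₌₁ⁿ xⱼ²) dx₀. In particular, the restriction of f̃*β to the unit sphere S^n ⊂ ℝ^{n+1} equals the restriction of the exact form d(x₀ − x₀³/3). -/

import Mathlib

open scoped RealInnerProductSpace

/-- The map `f̃(x₀, x₁, …, xₙ) = (x₁, x₀x₁, …, xₙ, x₀xₙ)` from `ℝ^{n+1}` to `ℝ^{2n}`. -/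
def ftilde (n : ℕ) (x : EuclideanSpace ℝ (Fin (n + 1))) : Fin n → ℝ × ℝ :=
  fun j => (x j.succ, x 0 * x j.succ)

lemma proj_hasFDerivAt (n : ℕ) (i : Fin (n + 1)) (x : EuclideanSpace ℝ (Fin (n + 1))) :
    HasFDerivAt (fun y : EuclideanSpace ℝ (Fin (n + 1)) => y i)
      (EuclideanSpace.proj i : EuclideanSpace ℝ (Fin (n + 1)) →L[ℝ] ℝ) x :=
  (EuclideanSpace.proj (𝕜 := ℝ) i).hasFDerivAt (x := x)

lemma ftilde_hasFDerivAt (n : ℕ) (x : EuclideanSpace ℝ (Fin (n + 1))) :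
    HasFDerivAt (ftilde n)
      (ContinuousLinearMap.pi fun j : Fin n =>
        ((EuclideanSpace.proj j.succ : EuclideanSpace ℝ (Fin (n + 1)) →L[ℝ] ℝ).prod
          (x 0 • (EuclideanSpace.proj j.succ : EuclideanSpace ℝ (Fin (n + 1)) →L[ℝ] ℝ)
            + x j.succ • (EuclideanSpace.proj 0 : EuclideanSpace ℝ (Fin (n + 1)) →L[ℝ] ℝ)))) x := by
  rw [hasFDerivAt_pi']
  intro j
  simp only [ContinuousLinearMap.proj_pi]
  exact HasFDerivAt.prodMk (proj_hasFDerivAt n j.succ x)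
    (HasFDerivAt.mul (proj_hasFDerivAt n 0 x) (proj_hasFDerivAt n j.succ x))

/-- The pullback under `f̃` of the primitive 1-form `β = Σⱼ (xⱼ dyⱼ − yⱼ dxⱼ)` equals
`(Σⱼ xⱼ²) dx₀`; in particular its restriction to the unit sphere `Sⁿ` equals the
restriction of the exact form `d(x₀ − x₀³/3)`. -/
theorem ftilde_pullback_beta (n : ℕ) (x v : EuclideanSpace ℝ (Fin (n + 1))) :
    (∑ j : Fin n, ((ftilde n x j).1 * (fderiv ℝ (ftilde n) x v j).2
        - (ftilde n x j).2 * (fderiv ℝ (ftilde n) x v j).1))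
      = (∑ j : Fin n, (x j.succ) ^ 2) * v 0 ∧
    (‖x‖ = 1 → ⟪v, x⟫ = 0 →
      (∑ j : Fin n, ((ftilde n x j).1 * (fderiv ℝ (ftilde n) x v j).2
          - (ftilde n x j).2 * (fderiv ℝ (ftilde n) x v j).1))
        = fderiv ℝ (fun y : EuclideanSpace ℝ (Fin (n + 1)) => y 0 - (y 0) ^ 3 / 3) x v) := by
  have hd := (ftilde_hasFDerivAt n x).fderiv
  have hsum : (∑ j : Fin n, ((ftilde n x j).1 * (fderiv ℝ (ftilde n) x v j).2
        - (ftilde n x j).2 * (fderiv ℝ (ftilde n) x v j).1))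
      = (∑ j : Fin n, (x j.succ) ^ 2) * v 0 := by
    rw [hd, Finset.sum_mul]
    refine Finset.sum_congr rfl fun j _ => ?_
    simp only [ftilde, ContinuousLinearMap.pi_apply, ContinuousLinearMap.prod_apply,
      ContinuousLinearMap.add_apply, ContinuousLinearMap.smul_apply,
      PiLp.proj_apply, smul_eq_mul]
    ring
  refine ⟨hsum, fun hx _ => ?_⟩
  have hh : HasDerivAt (fun t : ℝ => t - t ^ 3 / 3) (1 - x 0 ^ 2) (x 0) := by
    have := ((hasDerivAt_id (x 0)).sub (((hasDerivAt_pow 3 (x 0))).div_const 3))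
    convert this using 1 <;> try rfl
    push_cast
    ring
  have hg : HasFDerivAt (fun y : EuclideanSpace ℝ (Fin (n + 1)) => y 0 - (y 0) ^ 3 / 3)
      ((1 - x 0 ^ 2) • (EuclideanSpace.proj (0 : Fin (n+1)) : EuclideanSpace ℝ (Fin (n + 1)) →L[ℝ] ℝ)) x :=
    HasDerivAt.comp_hasFDerivAt (h₂ := fun t : ℝ => t - t ^ 3 / 3) x hh (proj_hasFDerivAt n 0 x)
  rw [hsum, hg.fderiv]
  have hnorm : ∑ i : Fin (n + 1), x i ^ 2 = 1 := by
    have h2 : ‖x‖ ^ 2 = ∑ i : Fin (n + 1), ‖x i‖ ^ 2 := by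
      rw [EuclideanSpace.norm_eq, Real.sq_sqrt (by positivity)]
    rw [hx] at h2
    simpa [Real.norm_eq_abs, sq_abs] using h2.symm
  have hx0 : ∑ j : Fin n, x j.succ ^ 2 = 1 - x 0 ^ 2 := by
    rw [← hnorm, Fin.sum_univ_succ]; ring
  simp only [ContinuousLinearMap.smul_apply, PiLp.proj_apply, smul_eq_mul, hx0]
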